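/- arXiv:2505.00328 — 3 statements merged into one kernel-verified Lean document; each statement's English description precedes it below -/
import Mathlib

section
/- Let (Σ_A, T) be a subshift of finite type and μ a Borel probability measure on Σ_A such that there is C > 1 and P > 0 with C⁻¹ exp(-nP) ≤ μ([x|_n]) ≤ C exp(-nP) for all x ∈ Σ_A and n ≥ 1. Equip Σ_A with a metric d such that B(x, exp(ψ_{n-1}(x))) ⊇ [x|_{n-1}] and B(x, r) ⊆ [x|_{n-1}] whenever exp(ψ_n(x)) < r ≤ exp(ψ_{n-1}(x)), where ψ_n(x) ≤ -c n for some c > 0 and |ψ_n(x) - ψ_n(y)| ≤ C' when x|_n = y|_n. Then for every x ∈ Σ_A, the lower local dimension of μ at x equals -P / liminf_{n→∞} ψ_n(x)/n and the upper local dimension equals -P / limsup_{n→∞} ψ_n(x)/n. -/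
open Filter MeasureTheory

private lemma le_of_forall_lt_le' {a b : ℝ} (h : ∀ z, z < a → z ≤ b) : a ≤ b := by
  by_contra hab
  push_neg at hab
  obtain ⟨z, hz1, hz2⟩ := exists_between hab
  exact absurd (h z hz2) (not_le.mpr hz1)

private lemma le_of_forall_gt_ge' {a b : ℝ} (h : ∀ z, b < z → a ≤ z) : a ≤ b := by
  by_contra hab
  push_neg at hab
  obtain ⟨z, hz1, hz2⟩ := exists_between hab
  exact absurd (h z hz1) (not_le.mpr hz2)

private lemma aux_le {P X D : ℝ} (hP : 0 < P) (hD : 0 < D)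
    (h : ∀ ε : ℝ, 0 < ε → ε < D → X ≤ P / (D - ε)) : X ≤ P / D := by
  by_contra hx
  push_neg at hx
  have hX : 0 < X := lt_trans (by positivity) hx
  have hXD : P < X * D := (div_lt_iff₀ hD).mp hx
  set ε := min (D / 2) ((X * D - P) / (2 * X)) with hε
  have hε0 : 0 < ε := lt_min (by linarith) (div_pos (by linarith) (by positivity))
  have hεD : ε < D := lt_of_le_of_lt (min_le_left _ _) (by linarith)
  have h2 : X * (D - ε) ≤ P := (le_div_iff₀ (by linarith)).mp (h ε hε0 hεD)
  rw [mul_sub] at h2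
  have h3 : X * ε ≤ (X * D - P) / 2 := by
    calc X * ε ≤ X * ((X * D - P) / (2 * X)) :=
          mul_le_mul_of_nonneg_left (min_le_right _ _) hX.le
      _ = (X * D - P) / 2 := by field_simp
  linarith

private lemma aux_ge {P X D : ℝ} (hP : 0 < P) (hD : 0 < D)
    (h : ∀ ε : ℝ, 0 < ε → P / (D + ε) ≤ X) : P / D ≤ X := by
  by_contra hx
  push_neg at hx
  have hX : 0 < X := lt_of_lt_of_le (by positivity) (h 1 one_pos)
  have hXD : X * D < P := (lt_div_iff₀ hD).mp hx
  set ε := (P - X * D) / (2 * X) with hε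
  have hε0 : 0 < ε := div_pos (by linarith) (by positivity)
  have h2 : P ≤ X * (D + ε) := (div_le_iff₀ (by linarith)).mp (h ε hε0)
  rw [mul_add] at h2
  have h3 : X * ε = (P - X * D) / 2 := by rw [hε]; field_simp
  linarith

private lemma my_cob_le {α : Type*} {l : Filter α} [l.NeBot] {u : α → ℝ} {b : ℝ}
    (h : ∃ᶠ n in l, b ≤ u n) : Filter.IsCoboundedUnder (· ≤ ·) l u := by
  refine ⟨b, fun a ha => ?_⟩
  obtain ⟨n, h1, h2⟩ := (h.and_eventually (Filter.eventually_map.mp ha)).exists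
  exact h1.trans h2

private lemma my_cob_ge {α : Type*} {l : Filter α} [l.NeBot] {u : α → ℝ} {b : ℝ}
    (h : ∃ᶠ n in l, u n ≤ b) : Filter.IsCoboundedUnder (· ≥ ·) l u := by
  refine ⟨b, fun a ha => ?_⟩
  obtain ⟨n, h1, h2⟩ := (h.and_eventually (Filter.eventually_map.mp ha)).exists
  exact h2.trans h1

private lemma my_bdd_le {α : Type*} {l : Filter α} {u : α → ℝ} {b : ℝ}
    (h : ∀ᶠ n in l, u n ≤ b) : Filter.IsBoundedUnder (· ≤ ·) l u :=
  ⟨b, Filter.eventually_map.mpr h⟩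

private lemma my_bdd_ge {α : Type*} {l : Filter α} {u : α → ℝ} {b : ℝ}
    (h : ∀ᶠ n in l, b ≤ u n) : Filter.IsBoundedUnder (· ≥ ·) l u :=
  ⟨b, Filter.eventually_map.mpr h⟩

set_option maxHeartbeats 3200000 in
/-- Local dimensions of a Gibbs-type measure on a symbolic space with a weak-Gibbs
metric.  `cyl x n` models the cylinder `[x|_n]`; the measure of cylinders decays
like `exp (-n P)`; cylinders are comparable to metric balls with radii
`exp (ψ_n x)` for a negative, bounded-variation potential `ψ`.  Then the lower
(resp. upper) local dimension of `μ` at every `x` equals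
`-P / liminf_n ψ_n(x)/n` (resp. `-P / limsup_n ψ_n(x)/n`). -/
theorem local_dimension_of_gibbs
    {X : Type*} [MetricSpace X] [MeasurableSpace X] [BorelSpace X]
    (μ : Measure X) [IsProbabilityMeasure μ]
    (cyl : X → ℕ → Set X) (ψ : ℕ → X → ℝ)
    (c : ℝ) (hc : 0 < c) (hneg : ∀ (n : ℕ) (x : X), 1 ≤ n → ψ n x ≤ -c * n)
    (C' : ℝ) (hbv : ∀ (n : ℕ) (x y : X), y ∈ cyl x n → |ψ n x - ψ n y| ≤ C')
    (C P : ℝ) (hC : 1 < C) (hP : 0 < P)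
    (hμl : ∀ (x : X) (n : ℕ), 1 ≤ n →
      C⁻¹ * Real.exp (-(n : ℝ) * P) ≤ (μ (cyl x n)).toReal)
    (hμu : ∀ (x : X) (n : ℕ), 1 ≤ n →
      (μ (cyl x n)).toReal ≤ C * Real.exp (-(n : ℝ) * P))
    (hin : ∀ (x : X) (n : ℕ), cyl x n ⊆ Metric.ball x (Real.exp (ψ n x)))
    (hout : ∀ (x : X) (n : ℕ) (r : ℝ), 1 ≤ n →
      Real.exp (ψ n x) < r → r ≤ Real.exp (ψ (n - 1) x) →
      Metric.ball x r ⊆ cyl x (n - 1)) :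
    ∀ x : X,
      liminf (fun r : ℝ => Real.log ((μ (Metric.ball x r)).toReal) / Real.log r)
          (nhdsWithin 0 (Set.Ioi 0))
        = -P / liminf (fun n : ℕ => ψ n x / n) atTop
      ∧ limsup (fun r : ℝ => Real.log ((μ (Metric.ball x r)).toReal) / Real.log r)
          (nhdsWithin 0 (Set.Ioi 0))
        = -P / limsup (fun n : ℕ => ψ n x / n) atTop := by
  intro x
  have hC0 : (0:ℝ) < C := one_pos.trans hC
  have hL : 0 < Real.log C := Real.log_pos hC
  set L : ℝ := Real.log C with hLdef
  set l : Filter ℝ := nhdsWithin 0 (Set.Ioi 0) with hl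
  haveI hlne : l.NeBot := by rw [hl]; exact nhdsGT_neBot 0
  set F : ℝ → ℝ := fun r : ℝ => Real.log ((μ (Metric.ball x r)).toReal) / Real.log r with hF
  set A : ℝ := liminf (fun n : ℕ => ψ n x / n) atTop with hA
  set B : ℝ := limsup (fun n : ℕ => ψ n x / n) atTop with hB
  -- basic measure facts
  have hfin : ∀ s : Set X, (μ s).toReal ≤ 1 := by
    intro s
    have := ENNReal.toReal_mono (by simp) (prob_le_one (μ := μ) (s := s))
    simpa using this
  have hmono : ∀ {s t : Set X}, s ⊆ t → (μ s).toReal ≤ (μ t).toReal :=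
    fun h => ENNReal.toReal_mono (measure_ne_top μ _) (measure_mono h)
  have hball_lb : ∀ r : ℝ, 0 < r → ∀ k : ℕ, 1 ≤ k → Real.exp (ψ k x) ≤ r →
      C⁻¹ * Real.exp (-(k:ℝ) * P) ≤ (μ (Metric.ball x r)).toReal := by
    intro r hr k hk hkr
    calc C⁻¹ * Real.exp (-(k:ℝ) * P) ≤ (μ (cyl x k)).toReal := hμl x k hk
      _ ≤ (μ (Metric.ball x r)).toReal :=
        hmono ((hin x k).trans (Metric.ball_subset_ball hkr))
  have hex_k : ∀ r : ℝ, 0 < r → ∃ k : ℕ, 1 ≤ k ∧ Real.exp (ψ k x) ≤ r := by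
    intro r hr
    obtain ⟨m, hm⟩ := exists_nat_ge ((1 - Real.log r) / c)
    refine ⟨max 1 m, le_max_left _ _, ?_⟩
    have hk1 : 1 ≤ max 1 m := le_max_left _ _
    have h1 := hneg (max 1 m) x hk1
    have h2 : ((1:ℝ) - Real.log r) / c ≤ ((max 1 m : ℕ) : ℝ) :=
      hm.trans (by exact_mod_cast Nat.cast_le.mpr (le_max_right 1 m))
    have h3 : 1 - Real.log r ≤ ((max 1 m : ℕ) : ℝ) * c := by
      rw [div_le_iff₀ hc] at h2; linarith
    have h4 : ψ (max 1 m) x ≤ Real.log r := by nlinarith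
    calc Real.exp (ψ (max 1 m) x) ≤ Real.exp (Real.log r) := Real.exp_le_exp.mpr h4
      _ = r := Real.exp_log hr
  have hball_pos : ∀ r : ℝ, 0 < r → 0 < (μ (Metric.ball x r)).toReal := by
    intro r hr
    obtain ⟨k, hk1, hkr⟩ := hex_k r hr
    exact lt_of_lt_of_le (by positivity) (hball_lb r hr k hk1 hkr)
  -- the sandwich
  have hSand : ∀ r : ℝ, 0 < r → (∃ k : ℕ, 1 ≤ k ∧ r ≤ Real.exp (ψ k x)) →
      ∃ N : ℕ, 1 ≤ N ∧ (∀ m : ℕ, 1 ≤ m → r ≤ Real.exp (ψ m x) → m ≤ N) ∧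
        c * N ≤ -Real.log r ∧ -ψ N x ≤ -Real.log r ∧ -Real.log r < -ψ (N+1) x ∧
        0 < -Real.log r ∧
        ((N:ℝ) * P - L) / (-Real.log r) ≤ F r ∧
        F r ≤ (((N:ℝ) + 1) * P + L) / (-Real.log r) := by
    rintro r hr ⟨k₁, hk₁, hrk₁⟩
    set S : Set ℕ := {k : ℕ | 1 ≤ k ∧ r ≤ Real.exp (ψ k x)} with hS
    have hSne : S.Nonempty := ⟨k₁, hk₁, hrk₁⟩
    have hSbdd : BddAbove S := by
      refine ⟨Nat.ceil ((-Real.log r) / c), fun k hk => ?_⟩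
      obtain ⟨hk1, hkr⟩ := hk
      have hlog : Real.log r ≤ ψ k x := (Real.log_le_iff_le_exp hr).mpr hkr
      have h1 := hneg k x hk1
      have h2 : (k:ℝ) ≤ (-Real.log r) / c := by
        rw [le_div_iff₀ hc]; nlinarith
      have h3 : (k:ℝ) ≤ (Nat.ceil ((-Real.log r) / c) : ℝ) := h2.trans (Nat.le_ceil _)
      exact_mod_cast h3
    set N : ℕ := sSup S with hN
    have hNS : N ∈ S := Nat.sSup_mem hSne hSbdd
    obtain ⟨hN1, hrN⟩ := hNS
    have hmax : ∀ m : ℕ, 1 ≤ m → r ≤ Real.exp (ψ m x) → m ≤ N :=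
      fun m h1 h2 => le_csSup hSbdd ⟨h1, h2⟩
    have hN1r : Real.exp (ψ (N+1) x) < r := by
      by_contra hcon
      push_neg at hcon
      have : N + 1 ≤ N := hmax (N+1) (Nat.le_add_left 1 N) hcon
      omega
    have hN1cast : (1:ℝ) ≤ (N:ℝ) := by exact_mod_cast hN1
    have hlogrN : Real.log r ≤ ψ N x := (Real.log_le_iff_le_exp hr).mpr hrN
    have hψN := hneg N x hN1
    have hcN : c * N ≤ -Real.log r := by nlinarith
    have hu0 : 0 < -Real.log r := by nlinarith
    -- upper bound on the measure
    have hub : (μ (Metric.ball x r)).toReal ≤ C * Real.exp (-(N:ℝ) * P) := by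
      have hsub : Metric.ball x r ⊆ cyl x N := by
        have h := hout x (N+1) r (Nat.le_add_left 1 N) hN1r
          (by simpa using hrN)
        simpa using h
      exact (hmono hsub).trans (hμu x N hN1)
    have hlb : C⁻¹ * Real.exp (-((N:ℝ)+1) * P) ≤ (μ (Metric.ball x r)).toReal := by
      have := hball_lb r hr (N+1) (Nat.le_add_left 1 N) hN1r.le
      convert this using 3
      push_cast
      ring
    have hμpos := hball_pos r hr
    -- logs
    have hlogub : Real.log ((μ (Metric.ball x r)).toReal) ≤ L - (N:ℝ) * P := by
      have h := Real.log_le_log hμpos hub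
      rwa [Real.log_mul (ne_of_gt hC0) (Real.exp_ne_zero _), Real.log_exp,
        show Real.log C + -(N:ℝ) * P = L - (N:ℝ) * P by rw [hLdef]; ring] at h
    have hloglb : -L - ((N:ℝ)+1) * P ≤ Real.log ((μ (Metric.ball x r)).toReal) := by
      have h := Real.log_le_log (by positivity) hlb
      rwa [Real.log_mul (by positivity) (Real.exp_ne_zero _), Real.log_inv, Real.log_exp,
        show -Real.log C + -((N:ℝ)+1) * P = -L - ((N:ℝ)+1) * P by rw [hLdef]; ring] at h
    have hFr : F r = (-Real.log ((μ (Metric.ball x r)).toReal)) / (-Real.log r) := by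
      rw [hF]; simp only []
      rw [neg_div_neg_eq]
    have hψlt : ψ (N+1) x < Real.log r := (Real.lt_log_iff_exp_lt hr).mpr hN1r
    refine ⟨N, hN1, hmax, hcN, by nlinarith, by linarith, hu0, ?_, ?_⟩
    · rw [hFr]
      exact (div_le_div_iff_of_pos_right hu0).mpr (by linarith)
    · rw [hFr]
      exact (div_le_div_iff_of_pos_right hu0).mpr (by linarith)
  -- eventual smallness in the filter
  have hEvSmall : ∀ ρ : ℝ, 0 < ρ → ∀ᶠ r in l, 0 < r ∧ r < ρ := by
    intro ρ hρ
    have h1 : ∀ᶠ r in l, r ∈ Set.Ioi (0:ℝ) := by rw [hl]; exact eventually_mem_nhdsWithin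
    have h2 : ∀ᶠ r in l, r < ρ := by
      rw [hl]
      exact (eventually_lt_nhds hρ).filter_mono nhdsWithin_le_nhds
    filter_upwards [h1, h2] with r hr1 hr2
    exact ⟨hr1, hr2⟩
  have hF0 : ∀ᶠ r in l, 0 ≤ F r := by
    filter_upwards [hEvSmall 1 one_pos] with r hr
    obtain ⟨hr0, hr1⟩ := hr
    have hlogr : Real.log r < 0 := Real.log_neg hr0 hr1
    have hlogμ : Real.log ((μ (Metric.ball x r)).toReal) ≤ 0 :=
      Real.log_nonpos ENNReal.toReal_nonneg (hfin _)
    exact div_nonneg_of_nonpos hlogμ hlogr.le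
  set Q : ℝ := P / c + (P + L) / c with hQ
  have hFub : ∀ᶠ r in l, F r ≤ Q := by
    filter_upwards [hEvSmall (Real.exp (ψ 1 x)) (Real.exp_pos _)] with r hr
    obtain ⟨hr0, hr1⟩ := hr
    obtain ⟨N, hN1, hNmax, hcN, hsN, hsN1, hu0, hlow, hup⟩ := hSand r hr0 ⟨1, le_refl 1, hr1.le⟩
    have hN1cast : (1:ℝ) ≤ (N:ℝ) := by exact_mod_cast hN1
    have hcc : c ≤ -Real.log r := by nlinarith
    have h1 : ((N:ℝ))*P/(-Real.log r) ≤ P/c := by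
      rw [div_le_div_iff₀ hu0 hc]
      nlinarith
    have h2 : (P+L)/(-Real.log r) ≤ (P+L)/c := by
      gcongr
    have h3 : (((N:ℝ)+1)*P + L)/(-Real.log r)
        = (N:ℝ)*P/(-Real.log r) + (P+L)/(-Real.log r) := by
      rw [← add_div]
      congr 1
      ring
    rw [hQ]
    calc F r ≤ (((N:ℝ)+1)*P + L)/(-Real.log r) := hup
      _ = (N:ℝ)*P/(-Real.log r) + (P+L)/(-Real.log r) := h3
      _ ≤ P/c + (P+L)/c := add_le_add h1 h2
  have bddF_le : Filter.IsBoundedUnder (· ≤ ·) l F := my_bdd_le hFub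
  have bddF_ge : Filter.IsBoundedUnder (· ≥ ·) l F := my_bdd_ge hF0
  have cobF_le : Filter.IsCoboundedUnder (· ≤ ·) l F := my_cob_le hF0.frequently
  have cobF_ge : Filter.IsCoboundedUnder (· ≥ ·) l F := my_cob_ge hFub.frequently
  have hα0 : 0 ≤ liminf F l := le_liminf_of_le cobF_ge hF0
  have hω0 : 0 ≤ limsup F l := le_limsup_of_frequently_le hF0.frequently bddF_le
  -- sequences of radii tending to 0⁺
  have tendsto_rexp : ∀ a : ℝ, Tendsto (fun n : ℕ => Real.exp (a + ψ n x)) atTop l := by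
    intro a
    rw [hl, tendsto_nhdsWithin_iff]
    constructor
    · refine squeeze_zero' (g := fun n : ℕ => Real.exp (a - c * (n:ℝ)))
        (Eventually.of_forall fun n => (Real.exp_pos _).le) ?_ ?_
      · filter_upwards [eventually_ge_atTop 1] with n hn
        exact Real.exp_le_exp.mpr (by have := hneg n x hn; linarith)
      · have h1 : Tendsto (fun n : ℕ => c * (n:ℝ)) atTop atTop :=
          Tendsto.const_mul_atTop hc tendsto_natCast_atTop_atTop
        have h2 : Tendsto (fun n : ℕ => -(c * (n:ℝ))) atTop atBot :=
          tendsto_neg_atTop_atBot.comp h1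
        have h3 : Tendsto (fun n : ℕ => a + -(c * (n:ℝ))) atTop atBot :=
          tendsto_atBot_add_const_left atTop a h2
        have h4 := Real.tendsto_exp_atBot.comp h3
        exact h4.congr (fun n => by simp [Function.comp, sub_eq_add_neg])
    · exact Eventually.of_forall fun n => Real.exp_pos _
  -- KEY LEMMA A : frequent smallness of -ψ gives lower bound on limsup
  have keyLA : ∀ G : ℝ, 0 < G → (∃ᶠ n : ℕ in atTop, -ψ n x ≤ G * n) →
      P / G ≤ limsup F l := by
    intro G hG hfreq
    apply le_of_forall_lt_le'
    intro z hz
    rcases le_or_gt z 0 with hz0 | hz0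
    · exact hz0.trans hω0
    have hPz : 0 < P - z * G := by
      have := (lt_div_iff₀ hG).mp hz
      linarith
    obtain ⟨n₀, hn₀⟩ := exists_nat_ge (L / (P - z * G))
    have hev : ∀ᶠ n : ℕ in atTop, 1 ≤ n ∧ L ≤ (P - z * G) * n := by
      filter_upwards [eventually_ge_atTop (max 1 n₀)] with n hn
      have h1 : 1 ≤ n := le_trans (le_max_left _ _) hn
      have h2 : (n₀:ℝ) ≤ (n:ℝ) := Nat.cast_le.mpr (le_trans (le_max_right _ _) hn)
      have h3 := (div_le_iff₀ hPz).mp (hn₀.trans h2)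
      exact ⟨h1, by linarith⟩
    have hfreqF : ∃ᶠ r in l, z ≤ F r := by
      apply (tendsto_rexp 0).frequently
      apply (hfreq.and_eventually hev).mono
      rintro n ⟨hsn, hn1, hnL⟩
      have hrpos : (0:ℝ) < Real.exp (0 + ψ n x) := Real.exp_pos _
      obtain ⟨N, hN1, hNmax, hcN, hsN, hsN1, hu0, hlow, hup⟩ :=
        hSand _ hrpos ⟨n, hn1, by rw [zero_add]⟩
      have hnN : n ≤ N := hNmax n hn1 (by rw [zero_add])
      have hueq : -Real.log (Real.exp (0 + ψ n x)) = -ψ n x := by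
        rw [Real.log_exp, zero_add]
      have hn0 : (0:ℝ) < (n:ℝ) := by exact_mod_cast hn1
      have hψn0 : 0 < -ψ n x := by rw [← hueq]; rw [hueq] at hu0 ⊢; exact hu0
      have hb1 : ((n:ℝ)*P - L)/(-Real.log (Real.exp (0 + ψ n x)))
          ≤ ((N:ℝ)*P - L)/(-Real.log (Real.exp (0 + ψ n x))) := by
        apply (div_le_div_iff_of_pos_right hu0).mpr
        have : (n:ℝ) ≤ (N:ℝ) := Nat.cast_le.mpr hnN
        nlinarith
      have hb2 : z ≤ ((n:ℝ)*P - L)/(-Real.log (Real.exp (0 + ψ n x))) := by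
        rw [hueq, le_div_iff₀ hψn0]
        have e1 : z * (-ψ n x) ≤ z * (G * n) := mul_le_mul_of_nonneg_left hsn hz0.le
        nlinarith
      exact hb2.trans (hb1.trans hlow)
    exact le_limsup_of_frequently_le hfreqF bddF_le
  -- KEY LEMMA B : frequent largeness of -ψ gives upper bound on liminf
  have keyLB : ∀ G : ℝ, 0 < G → (∃ᶠ n : ℕ in atTop, G * n ≤ -ψ n x) →
      liminf F l ≤ P / G := by
    intro G hG hfreq
    apply le_of_forall_gt_ge'
    intro z hz
    have hz0 : 0 < z := lt_trans (by positivity) hz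
    have hzG : 0 < z * G - P := by
      have := (div_lt_iff₀ hG).mp hz
      linarith
    obtain ⟨n₀, hn₀⟩ := exists_nat_ge (max ((L + z) / (z * G - P)) (2 / c))
    have hev : ∀ᶠ n : ℕ in atTop, 1 ≤ n ∧ (n:ℝ)*P + L ≤ z * (G * n - 1) ∧ 2 ≤ c * n := by
      filter_upwards [eventually_ge_atTop (max 1 n₀)] with n hn
      have h1 : 1 ≤ n := le_trans (le_max_left _ _) hn
      have h2 : (n₀:ℝ) ≤ (n:ℝ) := Nat.cast_le.mpr (le_trans (le_max_right _ _) hn)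
      have h3 : (L + z) / (z * G - P) ≤ (n:ℝ) := le_trans (le_trans (le_max_left _ _) hn₀) h2
      have h4 : 2 / c ≤ (n:ℝ) := le_trans (le_trans (le_max_right _ _) hn₀) h2
      have h5 := (div_le_iff₀ hzG).mp h3
      have h6 := (div_le_iff₀ hc).mp h4
      refine ⟨h1, by nlinarith, by nlinarith⟩
    have hfreqF : ∃ᶠ r in l, F r ≤ z := by
      apply (tendsto_rexp 1).frequently
      apply (hfreq.and_eventually hev).mono
      rintro n ⟨hsn, hn1, hnz, hnc⟩
      set r : ℝ := Real.exp (1 + ψ n x) with hrdef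
      have hrpos : (0:ℝ) < r := Real.exp_pos _
      have hψn := hneg n x hn1
      have hn0 : (0:ℝ) < (n:ℝ) := by exact_mod_cast hn1
      have hsn2 : 2 ≤ -ψ n x := by nlinarith
      have hlogr : Real.log r = 1 + ψ n x := by rw [hrdef, Real.log_exp]
      have hu0 : 0 < -Real.log r := by rw [hlogr]; linarith
      have hμlb : C⁻¹ * Real.exp (-(n:ℝ) * P) ≤ (μ (Metric.ball x r)).toReal :=
        hball_lb r hrpos n hn1 (Real.exp_le_exp.mpr (by linarith))
      have hloglb : -L - (n:ℝ) * P ≤ Real.log ((μ (Metric.ball x r)).toReal) := by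
        have h := Real.log_le_log (by positivity) hμlb
        rwa [Real.log_mul (by positivity) (Real.exp_ne_zero _), Real.log_inv, Real.log_exp,
          show -Real.log C + -(n:ℝ) * P = -L - (n:ℝ) * P by rw [hLdef]; ring] at h
      have hFr : F r = (-Real.log ((μ (Metric.ball x r)).toReal)) / (-Real.log r) := by
        rw [hF]
        simp only []
        rw [neg_div_neg_eq]
      rw [hFr, div_le_iff₀ hu0]
      have e0 : -Real.log r = -ψ n x - 1 := by rw [hlogr]; ring
      have e1 : G * n - 1 ≤ -Real.log r := by rw [e0]; linarith
      have e2 : z * (G * n - 1) ≤ z * (-Real.log r) := mul_le_mul_of_nonneg_left e1 hz0.le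
      nlinarith
    exact liminf_le_of_frequently_le hfreqF bddF_ge
  -- KEY LEMMA C : eventual largeness of -ψ gives upper bound on limsup
  have keyLC : ∀ G : ℝ, 0 < G → (∀ᶠ n : ℕ in atTop, G * n ≤ -ψ n x) →
      limsup F l ≤ P / G := by
    intro G hG hev
    apply le_of_forall_gt_ge'
    intro z hz
    have hz0 : 0 < z := lt_trans (by positivity) hz
    have hzG : 0 < z * G - P := by
      have := (div_lt_iff₀ hG).mp hz
      linarith
    obtain ⟨k₁, hk₁⟩ := eventually_atTop.mp hev
    obtain ⟨k₀, hk₀⟩ := exists_nat_ge ((P + L) / (z * G - P))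
    set k₂ : ℕ := max (max k₀ k₁) 1 with hk₂
    have hevF : ∀ᶠ r in l, F r ≤ z := by
      filter_upwards [hEvSmall (Real.exp (ψ 1 x)) (Real.exp_pos _),
        hEvSmall (Real.exp (ψ k₂ x)) (Real.exp_pos _)] with r hra hrb
      obtain ⟨hr0, hr1⟩ := hra
      obtain ⟨-, hrk⟩ := hrb
      obtain ⟨N, hN1, hNmax, hcN, hsN, hsN1, hu0, hlow, hup⟩ := hSand r hr0 ⟨1, le_refl 1, hr1.le⟩
      have hk₂N : k₂ ≤ N := hNmax k₂ (le_max_right _ 1) hrk.le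
      have hNk₀ : (k₀:ℝ) ≤ (N:ℝ) :=
        Nat.cast_le.mpr (le_trans (le_trans (le_max_left _ _) (le_max_left _ 1)) hk₂N)
      have hGN : G * N ≤ -ψ N x :=
        hk₁ N (le_trans (le_trans (le_max_right _ _) (le_max_left _ 1)) hk₂N)
      have huG : G * N ≤ -Real.log r := le_trans hGN hsN
      have hfin2 : (((N:ℝ)+1)*P + L)/(-Real.log r) ≤ z := by
        rw [div_le_iff₀ hu0]
        have e1 : z * (G * N) ≤ z * (-Real.log r) := mul_le_mul_of_nonneg_left huG hz0.le
        have e2 : (P + L) ≤ (N:ℝ) * (z * G - P) := (div_le_iff₀ hzG).mp (hk₀.trans hNk₀)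
        nlinarith
      exact hup.trans hfin2
    exact limsup_le_of_le cobF_le hevF
  -- KEY LEMMA D : eventual smallness of -ψ gives lower bound on liminf
  have keyLD : ∀ G : ℝ, 0 < G → (∀ᶠ n : ℕ in atTop, -ψ n x ≤ G * n) →
      P / G ≤ liminf F l := by
    intro G hG hev
    apply le_of_forall_lt_le'
    intro z hz
    rcases le_or_gt z 0 with hz0 | hz0
    · exact hz0.trans hα0
    have hPz : 0 < P - z * G := by
      have := (lt_div_iff₀ hG).mp hz
      linarith
    obtain ⟨k₁, hk₁⟩ := eventually_atTop.mp hev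
    obtain ⟨k₀, hk₀⟩ := exists_nat_ge ((L + z * G) / (P - z * G))
    set k₂ : ℕ := max (max k₀ k₁) 1 with hk₂
    have hevF : ∀ᶠ r in l, z ≤ F r := by
      filter_upwards [hEvSmall (Real.exp (ψ 1 x)) (Real.exp_pos _),
        hEvSmall (Real.exp (ψ k₂ x)) (Real.exp_pos _)] with r hra hrb
      obtain ⟨hr0, hr1⟩ := hra
      obtain ⟨-, hrk⟩ := hrb
      obtain ⟨N, hN1, hNmax, hcN, hsN, hsN1, hu0, hlow, hup⟩ := hSand r hr0 ⟨1, le_refl 1, hr1.le⟩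
      have hk₂N : k₂ ≤ N := hNmax k₂ (le_max_right _ 1) hrk.le
      have hNk₀ : (k₀:ℝ) ≤ (N:ℝ) :=
        Nat.cast_le.mpr (le_trans (le_trans (le_max_left _ _) (le_max_left _ 1)) hk₂N)
      have hGN1 : -ψ (N+1) x ≤ G * ((N:ℝ)+1) := by
        have h := hk₁ (N+1)
          (le_trans (le_trans (le_trans (le_max_right _ _) (le_max_left _ 1)) hk₂N)
            (Nat.le_succ N))
        have : ((N+1 : ℕ):ℝ) = (N:ℝ)+1 := by push_cast; ring
        rwa [this] at h
      have hzu : z * (-Real.log r) ≤ z * (G * ((N:ℝ)+1)) :=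
        mul_le_mul_of_nonneg_left (le_trans hsN1.le hGN1) hz0.le
      have e2 : (L + z * G) ≤ (N:ℝ) * (P - z * G) := (div_le_iff₀ hPz).mp (hk₀.trans hNk₀)
      have hzle : z ≤ ((N:ℝ) * P - L)/(-Real.log r) := by
        rw [le_div_iff₀ hu0]
        nlinarith
      exact hzle.trans hlow
    exact le_liminf_of_le cobF_ge hevF
  -- conversions between the sequence ψ n x / n and -ψ n x
  have hseq_ub : ∀ᶠ n : ℕ in atTop, ψ n x / n ≤ -c := by
    filter_upwards [eventually_ge_atTop 1] with n hn
    have hn0 : (0:ℝ) < (n:ℝ) := by exact_mod_cast hn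
    rw [div_le_iff₀ hn0]
    exact hneg n x hn
  have hbddabove : Filter.IsBoundedUnder (· ≤ ·) atTop (fun n : ℕ => ψ n x / n) :=
    my_bdd_le hseq_ub
  constructor
  · -- liminf statement
    by_cases hγ : ∀ M : ℝ, ∃ᶠ n : ℕ in atTop, M * n ≤ -ψ n x
    · have hA0 : A = 0 := by
        rw [hA, liminf_eq]
        refine (congrArg sSup (?_ : _ = (∅ : Set ℝ))).trans Real.sSup_empty
        ext a
        simp only [Set.mem_setOf_eq, Set.mem_empty_iff_false, iff_false]
        intro hev
        obtain ⟨n, hn1, hn2, hn3⟩ :=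
          ((hγ (-a+1)).and_eventually (hev.and (eventually_ge_atTop 1))).exists
        have hn0 : (0:ℝ) < (n:ℝ) := by exact_mod_cast hn3
        have h4 : a * n ≤ ψ n x := (le_div_iff₀ hn0).mp hn2
        have h5 : (-a+1)*(n:ℝ) = -(a*n) + n := by ring
        rw [h5] at hn1
        linarith
      have hup2 : liminf F l ≤ 0 := by
        apply le_of_forall_gt_ge'
        intro z hz
        have h := keyLB (P/z) (by positivity) (hγ (P/z))
        have heq2 : P / (P / z) = z := by
          field_simp
        rwa [heq2] at h
      rw [hA0, div_zero]
      exact le_antisymm hup2 hα0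
    · push_neg at hγ
      obtain ⟨M, hM⟩ := hγ
      have hM' : ∀ᶠ n : ℕ in atTop, -ψ n x < M * n := hM
      have hseq_lb : ∀ᶠ n : ℕ in atTop, -M ≤ ψ n x / n := by
        filter_upwards [hM', eventually_ge_atTop 1] with n h1 hn
        have hn0 : (0:ℝ) < (n:ℝ) := by exact_mod_cast hn
        rw [le_div_iff₀ hn0]
        have h5 : -M*(n:ℝ) = -(M*n) := by ring
        rw [h5]
        linarith
      have hbddbelow : Filter.IsBoundedUnder (· ≥ ·) atTop (fun n : ℕ => ψ n x / n) :=
        my_bdd_ge hseq_lb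
      have hcob_ge2 : Filter.IsCoboundedUnder (· ≥ ·) atTop (fun n : ℕ => ψ n x / n) :=
        my_cob_ge hseq_ub.frequently
      have hAc : A ≤ -c := by
        rw [hA]
        exact liminf_le_of_frequently_le hseq_ub.frequently hbddbelow
      have hA0 : 0 < -A := by linarith
      have hge : P / (-A) ≤ liminf F l := by
        apply aux_ge hP hA0
        intro ε hε
        apply keyLD (-A + ε) (by linarith)
        have h1 : ∀ᶠ n : ℕ in atTop, A - ε < ψ n x / n :=
          eventually_lt_of_lt_liminf (by rw [← hA]; linarith) hbddbelow
        filter_upwards [h1, eventually_ge_atTop 1] with n h2 h3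
        have hn0 : (0:ℝ) < (n:ℝ) := by exact_mod_cast h3
        have h4 : (A - ε) * n < ψ n x := (lt_div_iff₀ hn0).mp h2
        have h5 : (-A + ε) * (n:ℝ) = -((A - ε) * n) := by ring
        rw [h5]
        linarith
      have hle : liminf F l ≤ P / (-A) := by
        apply aux_le hP hA0
        intro ε hε hεD
        apply keyLB (-A - ε) (by linarith)
        have h1 : ∃ᶠ n : ℕ in atTop, ψ n x / n < A + ε :=
          frequently_lt_of_liminf_lt hcob_ge2 (by rw [← hA]; linarith)
        apply (h1.and_eventually (eventually_ge_atTop 1)).mono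
        rintro n ⟨h2, h3⟩
        have hn0 : (0:ℝ) < (n:ℝ) := by exact_mod_cast h3
        have h4 : ψ n x < (A + ε) * n := (div_lt_iff₀ hn0).mp h2
        have h5 : (-A - ε) * (n:ℝ) = -((A + ε) * n) := by ring
        rw [h5]
        linarith
      have heq : -P / A = P / (-A) := by rw [div_neg, neg_div]
      rw [heq]
      exact le_antisymm hle hge
  · -- limsup statement
    by_cases hβ : ∀ M : ℝ, ∀ᶠ n : ℕ in atTop, M * n ≤ -ψ n x
    · have hB0 : B = 0 := by
        rw [hB, limsup_eq]
        have huniv : {a : ℝ | ∀ᶠ n : ℕ in atTop, ψ n x / (n:ℝ) ≤ a} = Set.univ := by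
          ext a
          simp only [Set.mem_setOf_eq, Set.mem_univ, iff_true]
          filter_upwards [hβ (-a), eventually_ge_atTop 1] with n h1 h2
          have hn0 : (0:ℝ) < (n:ℝ) := by exact_mod_cast h2
          rw [div_le_iff₀ hn0]
          have h5 : -a*(n:ℝ) = -(a*n) := by ring
          rw [h5] at h1
          linarith
        rw [huniv]
        apply Real.sInf_of_not_bddBelow
        rintro ⟨b, hb⟩
        have h1 := hb (Set.mem_univ (b - 1))
        linarith
      have hup2 : limsup F l ≤ 0 := by
        apply le_of_forall_gt_ge'
        intro z hz
        have h := keyLC (P/z) (by positivity) (hβ (P/z))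
        have heq2 : P / (P / z) = z := by
          field_simp
        rwa [heq2] at h
      rw [hB0, div_zero]
      exact le_antisymm hup2 hω0
    · push_neg at hβ
      obtain ⟨M, hM⟩ := hβ
      have hM' : ∃ᶠ n : ℕ in atTop, -ψ n x < M * n := hM
      have hfreq_lb : ∃ᶠ n : ℕ in atTop, -M ≤ ψ n x / n := by
        apply (hM'.and_eventually (eventually_ge_atTop 1)).mono
        rintro n ⟨h1, h2⟩
        have hn0 : (0:ℝ) < (n:ℝ) := by exact_mod_cast h2
        rw [le_div_iff₀ hn0]
        have h5 : -M*(n:ℝ) = -(M*n) := by ring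
        rw [h5]
        linarith
      have hcob_le2 : Filter.IsCoboundedUnder (· ≤ ·) atTop (fun n : ℕ => ψ n x / n) :=
        my_cob_le hfreq_lb
      have hBc : B ≤ -c := by
        rw [hB]
        exact limsup_le_of_le hcob_le2 hseq_ub
      have hB0 : 0 < -B := by linarith
      have hge : P / (-B) ≤ limsup F l := by
        apply aux_ge hP hB0
        intro ε hε
        apply keyLA (-B + ε) (by linarith)
        have h1 : ∃ᶠ n : ℕ in atTop, B - ε < ψ n x / n :=
          frequently_lt_of_lt_limsup hcob_le2 (by rw [← hB]; linarith)
        apply (h1.and_eventually (eventually_ge_atTop 1)).mono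
        rintro n ⟨h2, h3⟩
        have hn0 : (0:ℝ) < (n:ℝ) := by exact_mod_cast h3
        have h4 : (B - ε) * n < ψ n x := (lt_div_iff₀ hn0).mp h2
        have h5 : (-B + ε) * (n:ℝ) = -((B - ε) * n) := by ring
        rw [h5]
        linarith
      have hle : limsup F l ≤ P / (-B) := by
        apply aux_le hP hB0
        intro ε hε hεD
        apply keyLC (-B - ε) (by linarith)
        have h1 : ∀ᶠ n : ℕ in atTop, ψ n x / n < B + ε :=
          eventually_lt_of_limsup_lt (by rw [← hB]; linarith) hbddabove
        filter_upwards [h1, eventually_ge_atTop 1] with n h2 h3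
        have hn0 : (0:ℝ) < (n:ℝ) := by exact_mod_cast h3
        have h4 : ψ n x < (B + ε) * n := (div_lt_iff₀ hn0).mp h2
        have h5 : (-B - ε) * (n:ℝ) = -((B + ε) * n) := by ring
        rw [h5]
        linarith
      have heq : -P / B = P / (-B) := by rw [div_neg, neg_div]
      rw [heq]
      exact le_antisymm hle hge
end

section
/- Let (X,T) be a topological dynamical system and Ψ = {ψ_n} a negative almost additive potential with bounded variation on a subshift of finite type. Suppose that for every y ∈ X, liminf_{n→∞} (1/n)(ψ_n(y) - inf_{x∈X} ψ_n(x)) ≥ ε₀ for some ε₀ > 0. Then this leads to a contradiction; hence inf_{y∈X} liminf_{n→∞} (1/n) ψ_n(y) = lim_{n→∞} (1/n) inf_{x∈X} ψ_n(x). -/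
open Filter

/-- For a negative almost additive potential `Ψ = {ψ_n}` (of continuous functions)
on a compact dynamical system, the pointwise infimum of the liminf of the averages
`ψ_n(y)/n` coincides with the limit of the normalized infima
`inf_x ψ_n(x) / n` (which exists). -/
theorem inf_liminf_eq_lim_inf
    {X : Type*} [MetricSpace X] [CompactSpace X] [Nonempty X]
    (T : X → X) (hT : Continuous T)
    (ψ : ℕ → X → ℝ) (hψ : ∀ n, Continuous (ψ n))
    (Caa : ℝ) (hCaa : 0 ≤ Caa)
    (haa : ∀ (x : X) (n m : ℕ), 1 ≤ n → 1 ≤ m →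
      |ψ (n + m) x - ψ n x - ψ m (T^[n] x)| ≤ Caa)
    (c : ℝ) (hc : 0 < c) (hneg : ∀ (n : ℕ) (x : X), 1 ≤ n → ψ n x ≤ -c * n) :
    ∃ L : ℝ,
      Tendsto (fun n : ℕ => sInf (Set.range (ψ n)) / n) atTop (nhds L) ∧
      (⨅ y : X, liminf (fun n : ℕ => ψ n y / n) atTop) = L := by
  classical
  set a : ℕ → ℝ := fun n => sInf (Set.range (ψ n)) with ha_def
  -- basic facts about `a`
  have hbdd : ∀ n, BddBelow (Set.range (ψ n)) := by
    intro n
    have := isCompact_univ.bddBelow_image (K := (Set.univ : Set X)) (hψ n).continuousOn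
    rwa [Set.image_univ] at this
  have ha_le : ∀ n (x : X), a n ≤ ψ n x := fun n x => csInf_le (hbdd n) ⟨x, rfl⟩
  have ha_neg : ∀ n, 1 ≤ n → a n ≤ -c * n := fun n hn =>
    (ha_le n (Classical.arbitrary X)).trans (hneg n (Classical.arbitrary X) hn)
  have ha_super : ∀ m n : ℕ, 1 ≤ m → 1 ≤ n → a m + a n - Caa ≤ a (m + n) := by
    intro m n hm hn
    refine le_csInf (Set.range_nonempty _) ?_
    rintro _ ⟨x, rfl⟩
    have h1 := (abs_le.mp (haa x m n hm hn)).1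
    have h2 := ha_le m x
    have h3 := ha_le n (T^[m] x)
    linarith
  -- the subadditive sequence `u`
  set u : ℕ → ℝ := fun n => if n = 0 then 0 else Caa - a n with hu_def
  have hu_sub : Subadditive u := by
    intro m n
    rcases Nat.eq_zero_or_pos m with hm | hm
    · simp [hu_def, hm]
    rcases Nat.eq_zero_or_pos n with hn | hn
    · simp [hu_def, hn]
    have hmn : m + n ≠ 0 := by omega
    have := ha_super m n hm hn
    simp only [hu_def, if_neg hmn, if_neg (by omega : m ≠ 0), if_neg (by omega : n ≠ 0)]
    linarith
  have hu_nonneg : ∀ n : ℕ, 0 ≤ u n / n := by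
    intro n
    rcases Nat.eq_zero_or_pos n with hn | hn
    · simp [hu_def, hn]
    have h1 : a n ≤ -c * n := ha_neg n hn
    have hn' : (0:ℝ) < n := by exact_mod_cast hn
    have : 0 ≤ u n := by
      simp only [hu_def, if_neg (by omega : n ≠ 0)]
      nlinarith
    positivity
  have hu_bdd : BddBelow (Set.range fun n : ℕ => u n / n) := by
    refine ⟨0, ?_⟩
    rintro _ ⟨n, rfl⟩
    exact hu_nonneg n
  set L : ℝ := -hu_sub.lim with hL_def
  -- convergence of `a n / n` to `L`
  have ha_tendsto : Tendsto (fun n : ℕ => a n / n) atTop (nhds L) := by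
    have h1 : Tendsto (fun n : ℕ => Caa / n - u n / n) atTop (nhds (0 - hu_sub.lim)) :=
      (tendsto_const_div_atTop_nhds_zero_nat Caa).sub (hu_sub.tendsto_lim hu_bdd)
    rw [zero_sub, ← hL_def] at h1
    refine h1.congr' ?_
    filter_upwards [eventually_ge_atTop 1] with n hn
    have hn0 : n ≠ 0 := by omega
    simp only [hu_def, if_neg hn0]
    rw [div_sub_div_same, sub_sub_cancel]
  -- upper bound `a n ≤ L * n + Caa`
  have ha_upper : ∀ n : ℕ, 1 ≤ n → a n ≤ L * n + Caa := by
    intro n hn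
    have hn0 : n ≠ 0 := by omega
    have hn' : (0:ℝ) < n := by exact_mod_cast hn
    have h1 : hu_sub.lim ≤ u n / n := hu_sub.lim_le_div hu_bdd hn0
    rw [le_div_iff₀ hn'] at h1
    simp only [hu_def, if_neg hn0] at h1
    have : -L * n ≤ Caa - a n := by rw [hL_def] at *; push_cast at *; linarith
    linarith
  -- easy direction : every liminf is at least L
  have hdiv : ∀ y : X, ∀ᶠ n : ℕ in atTop, a n / n ≤ ψ n y / n := by
    intro y
    filter_upwards [eventually_ge_atTop 1] with n hn
    have hn' : (0:ℝ) < n := by exact_mod_cast hn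
    exact div_le_div_of_nonneg_right (ha_le n y) hn'.le
  have hlow : ∀ y : X, L ≤ liminf (fun n : ℕ => ψ n y / n) atTop := by
    intro y
    have h1 : liminf (fun n : ℕ => a n / n) atTop = L := ha_tendsto.liminf_eq
    rw [← h1]
    have hble : IsBoundedUnder (· ≤ ·) atTop (fun n : ℕ => ψ n y / n) := by
      refine ⟨-c, ?_⟩
      rw [Filter.eventually_map]
      filter_upwards [eventually_ge_atTop 1] with n hn
      have hn' : (0:ℝ) < n := by exact_mod_cast hn
      rw [div_le_iff₀ hn']
      exact (hneg n y hn).trans_eq (by ring)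
    exact liminf_le_liminf (hdiv y) ha_tendsto.isBoundedUnder_ge hble.isCoboundedUnder_ge
  have hbddI : BddBelow (Set.range fun y : X => liminf (fun n : ℕ => ψ n y / n) atTop) := by
    refine ⟨L, ?_⟩
    rintro _ ⟨y, rfl⟩
    exact hlow y
  refine ⟨L, ha_tendsto, le_antisymm ?_ (le_ciInf hlow)⟩
  -- hard direction, by contradiction
  by_contra hgt
  push_neg at hgt
  set I : ℝ := ⨅ y : X, liminf (fun n : ℕ => ψ n y / n) atTop with hI_def
  set ε : ℝ := I - L with hε_def
  have hε : 0 < ε := by simp only [hε_def]; linarith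
  have hIy : ∀ y : X, L + ε ≤ liminf (fun n : ℕ => ψ n y / n) atTop := by
    intro y
    have := ciInf_le hbddI y
    simp only [hε_def]
    linarith [this]
  set β : ℝ := L + ε / 2 with hβ_def
  -- uniform cover by compactness
  set m₀ : ℕ := ⌈4 * Caa / ε⌉₊ + 1 with hm₀_def
  have hm₀1 : 1 ≤ m₀ := by omega
  have hm₀' : (0:ℝ) < m₀ := by exact_mod_cast hm₀1
  have hCm₀ : Caa / m₀ ≤ ε / 4 := by
    rw [div_le_iff₀ hm₀']
    have h1 : 4 * Caa / ε ≤ (m₀ : ℝ) := by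
      refine (Nat.le_ceil _).trans ?_
      exact_mod_cast Nat.le_succ _
    rw [div_le_iff₀ hε] at h1
    nlinarith
  have hcov : ∀ y : X, ∃ n : ℕ, m₀ ≤ n ∧ β * n < ψ n y := by
    intro y
    have hb : IsBoundedUnder (· ≥ ·) atTop (fun n : ℕ => ψ n y / n) := by
      refine ⟨L - 1, ?_⟩
      rw [Filter.eventually_map]
      filter_upwards [hdiv y, ha_tendsto.eventually (eventually_ge_nhds (show L - 1 < L by linarith))] with n h1 h2
      exact le_trans h2 h1
    have hlt : β < liminf (fun n : ℕ => ψ n y / n) atTop :=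
      lt_of_lt_of_le (by simp only [hβ_def]; linarith) (hIy y)
    have hev := eventually_lt_of_lt_liminf hlt hb
    rw [eventually_atTop] at hev
    obtain ⟨M, hM⟩ := hev
    refine ⟨max M m₀, le_max_right _ _, ?_⟩
    have h1 := hM (max M m₀) (le_max_left _ _)
    have hn' : (0:ℝ) < (max M m₀ : ℕ) := by
      have : 1 ≤ max M m₀ := le_trans hm₀1 (le_max_right _ _)
      exact_mod_cast this
    rw [lt_div_iff₀ hn'] at h1
    linarith
  -- finite subcover
  obtain ⟨t, ht⟩ := IsCompact.elim_finite_subcover isCompact_univ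
      (fun i : ℕ => {y : X | β * (m₀ + i : ℕ) < ψ (m₀ + i) y})
      (fun i => isOpen_lt continuous_const (hψ _))
      (by
        intro y _
        obtain ⟨n, hn1, hn2⟩ := hcov y
        exact Set.mem_iUnion.mpr ⟨n - m₀, by simpa [Nat.add_sub_cancel' hn1] using hn2⟩)
  set N : ℕ := m₀ + t.sup id with hN_def
  have hN1 : 1 ≤ N := by omega
  have key : ∀ y : X, ∃ n : ℕ, m₀ ≤ n ∧ n ≤ N ∧ β * n < ψ n y := by
    intro y
    obtain ⟨i, hit, hyi⟩ := Set.mem_iUnion₂.mp (ht (Set.mem_univ y))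
    refine ⟨m₀ + i, by omega, ?_, hyi⟩
    have : i ≤ t.sup id := Finset.le_sup (f := id) hit
    omega
  -- the constant A and G
  have hne : (Finset.Icc 1 N).Nonempty := ⟨1, by simp [hN1]⟩
  set A : ℝ := (Finset.Icc 1 N).sup' hne (fun m => -(a m)) with hA_def
  have hA : ∀ m : ℕ, 1 ≤ m → m ≤ N → -A ≤ a m := by
    intro m h1 h2
    have := Finset.le_sup' (f := fun m => -(a m)) (Finset.mem_Icc.mpr ⟨h1, h2⟩)
    linarith
  set G : ℝ := |β| * N + A with hG_def
  clear_value ε β A G N m₀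
  -- the main inductive estimate
  have main : ∀ K : ℕ, 1 ≤ K → ∀ y : X, β * K - (Caa / m₀) * K - G ≤ ψ K y := by
    intro K
    induction K using Nat.strong_induction_on with
    | _ K ih =>
      intro hK y
      by_cases hKN : K ≤ N
      · have h1 : -A ≤ a K := hA K hK hKN
        have h2 : a K ≤ ψ K y := ha_le K y
        have h3 : β * K ≤ |β| * K :=
          mul_le_mul_of_nonneg_right (le_abs_self β) (Nat.cast_nonneg K)
        have h4 : |β| * K ≤ |β| * N :=
          mul_le_mul_of_nonneg_left (by exact_mod_cast hKN) (abs_nonneg β)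
        have h5 : 0 ≤ (Caa / m₀) * K := by positivity
        simp only [hG_def]
        linarith
      · push_neg at hKN
        obtain ⟨n, hn1, hn2, hn3⟩ := key y
        have hnK : n < K := lt_of_le_of_lt hn2 hKN
        have hK' : 1 ≤ K - n := by omega
        have hadd := (abs_le.mp (haa y n (K - n) (le_trans hm₀1 hn1) hK')).1
        rw [Nat.add_sub_cancel' (le_of_lt hnK)] at hadd
        have ihh := ih (K - n) (by omega) hK' (T^[n] y)
        have hcast : ((K - n : ℕ) : ℝ) = (K : ℝ) - n := by
          push_cast [Nat.cast_sub (le_of_lt hnK)]; ring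
        rw [hcast] at ihh
        have hCn : Caa ≤ (Caa / m₀) * n := by
          have h1 : (m₀ : ℝ) ≤ n := by exact_mod_cast hn1
          have h2 : (Caa / m₀) * m₀ ≤ (Caa / m₀) * n :=
            mul_le_mul_of_nonneg_left h1 (by positivity)
          rw [div_mul_cancel₀ _ (ne_of_gt hm₀')] at h2
          exact h2
        have hexp1 : β * ((K:ℝ) - n) = β * K - β * n := by ring
        have hexp2 : Caa / (m₀:ℝ) * ((K:ℝ) - n) = Caa / m₀ * K - Caa / m₀ * n := by ring
        rw [hexp1, hexp2] at ihh
        linarith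
  -- contradiction
  set K₀ : ℕ := ⌈(G + Caa) / (ε / 4)⌉₊ + 1 with hK₀_def
  have hK₀1 : 1 ≤ K₀ := by omega
  have h1 : a K₀ ≤ L * K₀ + Caa := ha_upper K₀ hK₀1
  have h2 : β * K₀ - (Caa / m₀) * K₀ - G ≤ a K₀ := by
    refine le_csInf (Set.range_nonempty _) ?_
    rintro _ ⟨y, rfl⟩
    exact main K₀ hK₀1 y
  have h3 : (Caa / m₀) * K₀ ≤ (ε / 4) * K₀ :=
    mul_le_mul_of_nonneg_right hCm₀ (Nat.cast_nonneg K₀)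
  have h4 : (G + Caa) / (ε / 4) < (K₀ : ℝ) := by
    refine lt_of_le_of_lt (Nat.le_ceil _) ?_
    exact_mod_cast Nat.lt_succ_self _
  have h5 : G + Caa < (ε / 4) * K₀ := by
    rw [div_lt_iff₀ (by linarith : (0:ℝ) < ε / 4)] at h4
    linarith
  have hβK : β * K₀ = L * K₀ + (ε / 2) * K₀ := by simp only [hβ_def]; ring
  nlinarith
end

section
/- Let a₁, a₂ be positive integers and consider the function values determined by the Sturmian band-counting combinatorics: if max{a₁,a₂} = 1 then F̲(a) = -4/3, and if max{a₁,a₂} > 1 then F̲(a) = -max{a₁,a₂}; if min{a₁,a₂} = 1 then F̄(a) = -1, and if min{a₁,a₂} > 1 then F̄(a) = -2. Here F̲(a) = lim_n (1/n) inf_{v} S_n f(v) and F̄(a) = lim_n (1/n) sup_{v} S_n f(v) over the subshift Ω_a with f(v) = -2 + Σ_{j=1}^{2}(2-a_j)·χ{t(w_j)=2} for v|₁ = w₁w₂. -/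
open Filter

/-- Letters `(t, i)` of the alphabet `𝒜_m`: here `t : Fin 3` encodes the type
(`0 ↦ 𝟏`, `1 ↦ 𝟐`, `2 ↦ 𝟑`) and `i` the index, so
`𝒜_m = {(𝟏,i) : 1 ≤ i ≤ m+1} ∪ {(𝟐,1)} ∪ {(𝟑,i) : 1 ≤ i ≤ m}`. -/
def validLetter (m : ℕ) (e : Fin 3 × ℕ) : Prop :=
  (e.1 = 0 ∧ 1 ≤ e.2 ∧ e.2 ≤ m + 1) ∨ (e.1 = 1 ∧ e.2 = 1) ∨ (e.1 = 2 ∧ 1 ≤ e.2 ∧ e.2 ≤ m)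

/-- Admissible transition from a letter of type `t` to a letter `e ∈ 𝒜_m`:
type `𝟏 → (𝟐,1)`; type `𝟐 → (𝟏,i)` (`i ≤ m+1`) or `(𝟑,i)` (`i ≤ m`);
type `𝟑 → (𝟏,i)` (`i ≤ m`) or `(𝟑,i)` (`i ≤ m-1`). -/
def letterTrans (m : ℕ) (t : Fin 3) (e : Fin 3 × ℕ) : Prop :=
  validLetter m e ∧
    ((t = 0 ∧ e.1 = 1) ∨
     (t = 1 ∧ (e.1 = 0 ∨ e.1 = 2)) ∨
     (t = 2 ∧ ((e.1 = 0 ∧ e.2 ≤ m) ∨ (e.1 = 2 ∧ e.2 + 1 ≤ m))))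

/-- The subshift `Ω_a` for a block `a = (a₁, a₂)`: sequences of admissible pairs
`(w₁, w₂)` with `w₁ ∈ 𝒜_{a₁}`, `w₂ ∈ 𝒜_{a₂}`, within-pair and between-pair
transitions admissible. -/
def OmegaPair (a₁ a₂ : ℕ) : Set (ℕ → (Fin 3 × ℕ) × (Fin 3 × ℕ)) :=
  {v | ∀ n : ℕ, validLetter a₁ (v n).1 ∧ letterTrans a₂ ((v n).1).1 (v n).2 ∧
        letterTrans a₁ ((v n).2).1 (v (n + 1)).1}

/-- The function `f(v) = -2 + Σ_{j=1}^{2} (2 - a_j) χ{t(w_j) = 𝟐}` for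
`v|₁ = w₁w₂`. -/
def fPair (a₁ a₂ : ℕ) (v : ℕ → (Fin 3 × ℕ) × (Fin 3 × ℕ)) : ℝ :=
  -2 + (if ((v 0).1).1 = 1 then (2 : ℝ) - (a₁ : ℝ) else 0)
     + (if ((v 0).2).1 = 1 then (2 : ℝ) - (a₂ : ℝ) else 0)

/-- Birkhoff sum `S_n f` of `fPair` along the shift on `Ω_a`. -/
def birkhoffPair (a₁ a₂ n : ℕ) (v : ℕ → (Fin 3 × ℕ) × (Fin 3 × ℕ)) : ℝ :=
  ∑ i ∈ Finset.range n, fPair a₁ a₂ (fun j => v (j + i))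

lemma not_both {a₁ a₂ : ℕ} {v} (hv : v ∈ OmegaPair a₁ a₂) (n : ℕ) :
    ¬(((v n).1).1 = 1 ∧ ((v n).2).1 = 1) := by
  rintro ⟨h1, h2⟩
  obtain ⟨-, ⟨-, htr⟩, -⟩ := hv n
  rw [h1, h2] at htr
  rcases htr with ⟨h, -⟩ | ⟨-, h | h⟩ | ⟨h, -⟩ <;> simp_all

lemma fPair_shift (a₁ a₂ : ℕ) (v : ℕ → (Fin 3 × ℕ) × (Fin 3 × ℕ)) (i : ℕ) :
    fPair a₁ a₂ (fun j => v (j + i)) =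
      -2 + (if ((v i).1).1 = 1 then (2 : ℝ) - (a₁ : ℝ) else 0)
         + (if ((v i).2).1 = 1 then (2 : ℝ) - (a₂ : ℝ) else 0) := by
  simp [fPair]

lemma fPair_shift_bounds (a₁ a₂ : ℕ) {v} (hv : v ∈ OmegaPair a₁ a₂) (i : ℕ) :
    -(((max 2 (max a₁ a₂) : ℕ) : ℝ)) ≤ fPair a₁ a₂ (fun j => v (j + i)) ∧
      fPair a₁ a₂ (fun j => v (j + i)) ≤ -(((min 2 (min a₁ a₂) : ℕ) : ℝ)) := by
  have hnb := not_both hv i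
  have hM1 : (a₁ : ℝ) ≤ ((max 2 (max a₁ a₂) : ℕ) : ℝ) := by
    exact_mod_cast le_trans (le_max_left a₁ a₂) (le_max_right 2 _)
  have hM2 : (a₂ : ℝ) ≤ ((max 2 (max a₁ a₂) : ℕ) : ℝ) := by
    exact_mod_cast le_trans (le_max_right a₁ a₂) (le_max_right 2 _)
  have hM3 : (2 : ℝ) ≤ ((max 2 (max a₁ a₂) : ℕ) : ℝ) := by exact_mod_cast le_max_left 2 _
  have hm1 : ((min 2 (min a₁ a₂) : ℕ) : ℝ) ≤ a₁ := by
    exact_mod_cast le_trans (min_le_right 2 _) (min_le_left a₁ a₂)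
  have hm2 : ((min 2 (min a₁ a₂) : ℕ) : ℝ) ≤ a₂ := by
    exact_mod_cast le_trans (min_le_right 2 _) (min_le_right a₁ a₂)
  have hm3 : ((min 2 (min a₁ a₂) : ℕ) : ℝ) ≤ 2 := by exact_mod_cast min_le_left 2 _
  rw [fPair_shift]
  by_cases h1 : ((v i).1).1 = 1 <;> by_cases h2 : ((v i).2).1 = 1
  · exact absurd ⟨h1, h2⟩ hnb
  · rw [if_pos h1, if_neg h2]; constructor <;> linarith
  · rw [if_neg h1, if_pos h2]; constructor <;> linarith
  · rw [if_neg h1, if_neg h2]; constructor <;> linarith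

lemma birkhoff_const (a₁ a₂ n : ℕ) (p : (Fin 3 × ℕ) × (Fin 3 × ℕ)) :
    birkhoffPair a₁ a₂ n (fun _ => p) = n * fPair a₁ a₂ (fun _ => p) := by
  simp [birkhoffPair]

lemma memBA (a₁ a₂ : ℕ) : (fun _ => (((1 : Fin 3), 1), ((0 : Fin 3), 1))) ∈ OmegaPair a₁ a₂ := by
  intro n
  refine ⟨?_, ⟨?_, ?_⟩, ?_, ?_⟩ <;> simp [validLetter, letterTrans] <;> omega

lemma memAB (a₁ a₂ : ℕ) : (fun _ => (((0 : Fin 3), 1), ((1 : Fin 3), 1))) ∈ OmegaPair a₁ a₂ := by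
  intro n
  refine ⟨?_, ⟨?_, ?_⟩, ?_, ?_⟩ <;> simp [validLetter, letterTrans] <;> omega

lemma memCC (a₁ a₂ : ℕ) (h₁ : 2 ≤ a₁) (h₂ : 2 ≤ a₂) :
    (fun _ => (((2 : Fin 3), 1), ((2 : Fin 3), 1))) ∈ OmegaPair a₁ a₂ := by
  intro n
  refine ⟨?_, ⟨?_, ?_⟩, ?_, ?_⟩ <;> simp [validLetter, letterTrans] <;> omega

lemma fBA (a₁ a₂ : ℕ) : fPair a₁ a₂ (fun _ => (((1 : Fin 3), 1), ((0 : Fin 3), 1))) = -(a₁ : ℝ) := by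
  simp [fPair]; ring

lemma fAB (a₁ a₂ : ℕ) : fPair a₁ a₂ (fun _ => (((0 : Fin 3), 1), ((1 : Fin 3), 1))) = -(a₂ : ℝ) := by
  simp [fPair]; ring

lemma fCC (a₁ a₂ : ℕ) : fPair a₁ a₂ (fun _ => (((2 : Fin 3), 1), ((2 : Fin 3), 1))) = -2 := by
  simp [fPair]

lemma tendsto_linear_div (c : ℝ) :
    Tendsto (fun n : ℕ => (c * n) / n) atTop (nhds c) := by
  have h : ∀ᶠ n : ℕ in atTop, c = (c * n) / n := by
    filter_upwards [eventually_gt_atTop 0] with n hn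
    rw [mul_div_assoc, div_self (by exact_mod_cast hn.ne'), mul_one]
  exact tendsto_const_nhds.congr' h

lemma sSup_birkhoff (a₁ a₂ : ℕ) (h₁ : 1 ≤ a₁) (h₂ : 1 ≤ a₂) (n : ℕ) :
    IsGreatest (birkhoffPair a₁ a₂ n '' OmegaPair a₁ a₂)
      (-((min 2 (min a₁ a₂) : ℕ) : ℝ) * n) := by
  constructor
  · rcases eq_or_lt_of_le h₁ with h | h
    · refine ⟨_, memBA a₁ a₂, ?_⟩
      rw [birkhoff_const, fBA]
      have : min 2 (min a₁ a₂) = a₁ := by omega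
      rw [this]; ring
    · rcases eq_or_lt_of_le h₂ with h' | h'
      · refine ⟨_, memAB a₁ a₂, ?_⟩
        rw [birkhoff_const, fAB]
        have : min 2 (min a₁ a₂) = a₂ := by omega
        rw [this]; ring
      · refine ⟨_, memCC a₁ a₂ h h', ?_⟩
        rw [birkhoff_const, fCC]
        have : min 2 (min a₁ a₂) = 2 := by omega
        rw [this]; push_cast; ring
  · rintro x ⟨v, hv, rfl⟩
    calc birkhoffPair a₁ a₂ n v
        ≤ ∑ i ∈ Finset.range n, -(((min 2 (min a₁ a₂) : ℕ) : ℝ)) :=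
          Finset.sum_le_sum fun i _ => (fPair_shift_bounds a₁ a₂ hv i).2
      _ = -((min 2 (min a₁ a₂) : ℕ) : ℝ) * n := by
          simp [Finset.sum_const, mul_comm]

lemma sInf_birkhoff (a₁ a₂ : ℕ) (h : 2 ≤ max a₁ a₂) (n : ℕ) :
    IsLeast (birkhoffPair a₁ a₂ n '' OmegaPair a₁ a₂) (-((max a₁ a₂ : ℕ) : ℝ) * n) := by
  have hmax : max 2 (max a₁ a₂) = max a₁ a₂ := by omega
  constructor
  · rcases le_or_gt a₂ a₁ with h' | h'
    · refine ⟨_, memBA a₁ a₂, ?_⟩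
      rw [birkhoff_const, fBA]
      have : max a₁ a₂ = a₁ := by omega
      rw [this]; ring
    · refine ⟨_, memAB a₁ a₂, ?_⟩
      rw [birkhoff_const, fAB]
      have : max a₁ a₂ = a₂ := by omega
      rw [this]; ring
  · rintro x ⟨v, hv, rfl⟩
    calc (-((max a₁ a₂ : ℕ) : ℝ) * n : ℝ)
        = ∑ i ∈ Finset.range n, -((max a₁ a₂ : ℕ) : ℝ) := by
          simp [Finset.sum_const, mul_comm]
      _ ≤ birkhoffPair a₁ a₂ n v :=
          Finset.sum_le_sum fun i _ => by
            have := (fPair_shift_bounds a₁ a₂ hv i).1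
            rwa [hmax] at this

lemma fin3cases (t : Fin 3) : t = 0 ∨ t = 1 ∨ t = 2 := by fin_cases t <;> simp

/-- Among any three consecutive letters (for blocks `m = 1`) there is a type-2 letter. -/
lemma window {x y z : Fin 3 × ℕ} (hxy : letterTrans 1 x.1 y) (hyz : letterTrans 1 y.1 z) :
    x.1 = 1 ∨ y.1 = 1 ∨ z.1 = 1 := by
  rcases fin3cases x.1 with hx | hx | hx
  · -- x of type 0 : next is type 1
    rcases hxy.2 with ⟨-, h⟩ | ⟨h, -⟩ | ⟨h, -⟩ <;> simp_all
  · exact Or.inl hx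
  · -- x of type 2 (𝟑): with m = 1, next must be type 0, then the one after is type 1
    have hy : y.1 = 0 := by
      obtain ⟨hval, htr⟩ := hxy
      rcases htr with ⟨h, -⟩ | ⟨h, -⟩ | ⟨-, ⟨h, -⟩ | ⟨h, hle⟩⟩
      · simp_all
      · simp_all
      · exact h
      · -- y of type 2 with index + 1 ≤ 1 contradicts validity
        exfalso
        rcases hval with ⟨h0, -⟩ | ⟨h0, -⟩ | ⟨-, h1, -⟩ <;> simp_all <;> omega
    rcases hyz.2 with ⟨-, h⟩ | ⟨h, -⟩ | ⟨h, -⟩ <;> simp_all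

/-- In the case `a₁ = a₂ = 1`, any three consecutive pairs contribute at least `-4`. -/
lemma triple_bound {v} (hv : v ∈ OmegaPair 1 1) (i : ℕ) :
    -4 ≤ fPair 1 1 (fun j => v (j + i)) + fPair 1 1 (fun j => v (j + (i + 1)))
      + fPair 1 1 (fun j => v (j + (i + 2))) := by
  have h1 := window (hv i).2.1 (hv i).2.2
  have h2 := window ((hv (i + 1)).2.2) ((hv (i + 2)).2.1)
  rw [fPair_shift, fPair_shift, fPair_shift]
  have e : (2 : ℝ) - (1 : ℕ) = 1 := by norm_num
  rw [e]
  have ind_nonneg : ∀ (b : Prop) [Decidable b], (0 : ℝ) ≤ if b then (1 : ℝ) else 0 := by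
    intro b _; split <;> norm_num
  rcases h1 with h | h | h <;> rcases h2 with h' | h' | h' <;>
    rw [if_pos h, if_pos h'] <;>
    [skip; skip; skip; skip; skip; skip; skip; skip; skip] <;>
    nlinarith [ind_nonneg (((v i).1).1 = 1), ind_nonneg (((v i).2).1 = 1),
      ind_nonneg (((v (i+1)).1).1 = 1), ind_nonneg (((v (i+1)).2).1 = 1),
      ind_nonneg (((v (i+2)).1).1 = 1), ind_nonneg (((v (i+2)).2).1 = 1)]

lemma lb11 : ∀ n : ℕ, ∀ v ∈ OmegaPair 1 1, -4 / 3 * n - 2 ≤ birkhoffPair 1 1 n v := by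
  intro n
  induction n using Nat.strong_induction_on with
  | _ n ih =>
    intro v hv
    have hlow : ∀ i, (-2 : ℝ) ≤ fPair 1 1 (fun j => v (j + i)) := by
      intro i
      have := (fPair_shift_bounds 1 1 hv i).1
      norm_num at this
      exact this
    match n with
    | 0 => norm_num [birkhoffPair]
    | 1 =>
      have := hlow 0
      simp only [birkhoffPair, Finset.range_one, Finset.sum_singleton]
      push_cast
      linarith
    | 2 =>
      have h0 := hlow 0
      have h1 := hlow 1
      rw [birkhoffPair, Finset.sum_range_succ, Finset.sum_range_one]
      push_cast
      linarith
    | (m + 3) =>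
      have hih := ih m (by omega) v hv
      have htr := triple_bound hv m
      rw [birkhoffPair, Finset.sum_range_succ, Finset.sum_range_succ, Finset.sum_range_succ]
      rw [birkhoffPair] at hih
      push_cast
      push_cast at hih
      linarith

/-- Periodic point of period 3 for `a₁ = a₂ = 1`. -/
def vper : ℕ → (Fin 3 × ℕ) × (Fin 3 × ℕ) := fun i =>
  if i % 3 = 0 then (((1 : Fin 3), 1), ((2 : Fin 3), 1))
  else if i % 3 = 1 then (((0 : Fin 3), 1), ((1 : Fin 3), 1))
  else (((2 : Fin 3), 1), ((0 : Fin 3), 1))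

lemma vper_mem : vper ∈ OmegaPair 1 1 := by
  intro n
  have h : n % 3 = 0 ∨ n % 3 = 1 ∨ n % 3 = 2 := by omega
  rcases h with h | h | h
  · have h' : (n + 1) % 3 = 1 := by omega
    refine ⟨?_, ⟨?_, ?_⟩, ?_, ?_⟩ <;> simp [vper, h, h', validLetter, letterTrans]
  · have h' : (n + 1) % 3 = 2 := by omega
    refine ⟨?_, ⟨?_, ?_⟩, ?_, ?_⟩ <;> simp [vper, h, h', validLetter, letterTrans]
  · have h' : (n + 1) % 3 = 0 := by omega
    refine ⟨?_, ⟨?_, ?_⟩, ?_, ?_⟩ <;> simp [vper, h, h', validLetter, letterTrans]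

lemma vper_f (i : ℕ) :
    fPair 1 1 (fun j => vper (j + i)) = if i % 3 = 2 then -2 else -1 := by
  rw [fPair_shift]
  have h : i % 3 = 0 ∨ i % 3 = 1 ∨ i % 3 = 2 := by omega
  rcases h with h | h | h <;> simp [vper, h] <;> norm_num

lemma ub11 : ∀ n : ℕ, birkhoffPair 1 1 n vper ≤ -4 / 3 * n + 2 := by
  intro n
  induction n using Nat.strong_induction_on with
  | _ n ih =>
    match n with
    | 0 => norm_num [birkhoffPair]
    | 1 =>
      simp only [birkhoffPair, Finset.range_one, Finset.sum_singleton, vper_f]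
      norm_num
    | 2 =>
      rw [birkhoffPair, Finset.sum_range_succ, Finset.sum_range_one, vper_f, vper_f]
      norm_num
    | (m + 3) =>
      have hih := ih m (by omega)
      have h : m % 3 = 0 ∨ m % 3 = 1 ∨ m % 3 = 2 := by omega
      have hsum : fPair 1 1 (fun j => vper (j + m)) + fPair 1 1 (fun j => vper (j + (m + 1)))
          + fPair 1 1 (fun j => vper (j + (m + 2))) = -4 := by
        rw [vper_f, vper_f, vper_f]
        rcases h with h | h | h <;>
          · have e1 : (m + 1) % 3 = (m % 3 + 1) % 3 := by omega
            have e2 : (m + 2) % 3 = (m % 3 + 2) % 3 := by omega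
            rw [h] at *
            simp_all
            norm_num
      rw [birkhoffPair, Finset.sum_range_succ, Finset.sum_range_succ, Finset.sum_range_succ]
      rw [birkhoffPair] at hih
      push_cast
      push_cast at hih
      linarith

lemma tendsto_affine_div (c d : ℝ) :
    Tendsto (fun n : ℕ => (c * n + d) / n) atTop (nhds c) := by
  have h := (tendsto_linear_div c).add (tendsto_const_div_atTop_nhds_zero_nat d)
  simp only [← add_div] at h
  simpa using h

/-- The extremal Birkhoff averages over the subshift `Ω_a`, `a = (a₁,a₂)`:
`F̲(a) = lim (1/n) inf_v S_n f(v)` equals `-4/3` when `max{a₁,a₂} = 1` and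
`-max{a₁,a₂}` otherwise; `F̄(a) = lim (1/n) sup_v S_n f(v)` equals `-1` when
`min{a₁,a₂} = 1` and `-2` otherwise. -/
theorem extremal_birkhoff_averages_period_two (a₁ a₂ : ℕ) (h₁ : 1 ≤ a₁) (h₂ : 1 ≤ a₂) :
    ∃ Flow Fupp : ℝ,
      Tendsto (fun n : ℕ => sInf (birkhoffPair a₁ a₂ n '' OmegaPair a₁ a₂) / n)
        atTop (nhds Flow) ∧
      Tendsto (fun n : ℕ => sSup (birkhoffPair a₁ a₂ n '' OmegaPair a₁ a₂) / n)
        atTop (nhds Fupp) ∧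
      Flow = (if max a₁ a₂ = 1 then -4 / 3 else -(max a₁ a₂ : ℝ)) ∧
      Fupp = (if min a₁ a₂ = 1 then -1 else -2) := by
  have hsup : Tendsto (fun n : ℕ => sSup (birkhoffPair a₁ a₂ n '' OmegaPair a₁ a₂) / n)
      atTop (nhds (-((min 2 (min a₁ a₂) : ℕ) : ℝ))) := by
    have hs : ∀ n : ℕ, sSup (birkhoffPair a₁ a₂ n '' OmegaPair a₁ a₂)
        = -((min 2 (min a₁ a₂) : ℕ) : ℝ) * n := fun n => (sSup_birkhoff a₁ a₂ h₁ h₂ n).csSup_eq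
    simp only [hs]
    exact tendsto_linear_div _
  have hFupp : (-((min 2 (min a₁ a₂) : ℕ) : ℝ)) = (if min a₁ a₂ = 1 then -1 else -2) := by
    by_cases hm : min a₁ a₂ = 1
    · rw [if_pos hm, hm]; norm_num
    · rw [if_neg hm]
      have : min 2 (min a₁ a₂) = 2 := by omega
      rw [this]; norm_num
  by_cases hA : max a₁ a₂ = 1
  · have e1 : a₁ = 1 := by omega
    have e2 : a₂ = 1 := by omega
    subst e1; subst e2
    refine ⟨-4 / 3, -((min 2 (min 1 1) : ℕ) : ℝ), ?_, hsup, by rw [if_pos hA], hFupp⟩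
    have hlo : ∀ n : ℕ, -4 / 3 * (n : ℝ) + -2 ≤ sInf (birkhoffPair 1 1 n '' OmegaPair 1 1) := by
      intro n
      refine le_csInf ⟨_, ⟨vper, vper_mem, rfl⟩⟩ ?_
      rintro x ⟨v, hv, rfl⟩
      have := lb11 n v hv
      linarith
    have hhi : ∀ n : ℕ, sInf (birkhoffPair 1 1 n '' OmegaPair 1 1) ≤ -4 / 3 * (n : ℝ) + 2 := by
      intro n
      refine le_trans (csInf_le ?_ ⟨vper, vper_mem, rfl⟩) (ub11 n)
      refine ⟨-4 / 3 * (n : ℝ) - 2, ?_⟩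
      rintro x ⟨v, hv, rfl⟩
      exact lb11 n v hv
    refine tendsto_of_tendsto_of_tendsto_of_le_of_le' (tendsto_affine_div (-4 / 3) (-2))
      (tendsto_affine_div (-4 / 3) 2) ?_ ?_
    · filter_upwards [eventually_gt_atTop 0] with n hn
      have hc : (0 : ℝ) < n := by exact_mod_cast hn
      exact div_le_div_of_nonneg_right (hlo n) hc.le
    · filter_upwards [eventually_gt_atTop 0] with n hn
      have hc : (0 : ℝ) < n := by exact_mod_cast hn
      exact div_le_div_of_nonneg_right (hhi n) hc.le
  · have hmax : 2 ≤ max a₁ a₂ := by omega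
    refine ⟨-((max a₁ a₂ : ℕ) : ℝ), -((min 2 (min a₁ a₂) : ℕ) : ℝ), ?_, hsup,
      by rw [if_neg hA]; push_cast; rfl, hFupp⟩
    have hs : ∀ n : ℕ, sInf (birkhoffPair a₁ a₂ n '' OmegaPair a₁ a₂)
        = -((max a₁ a₂ : ℕ) : ℝ) * n := fun n => (sInf_birkhoff a₁ a₂ hmax n).csInf_eq
    simp only [hs]
    exact tendsto_linear_div _
end
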